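/- Let p : E → B be a fibration over a normal space B. Then secat(p) ≤ n if and only if the (n+1)-fold fiberwise join *_B^{n+1} p : *_B^{n+1} E → B admits a (global continuous) section. -/

import Mathlib

open unitInterval

universe u

/-- The Hurewicz homotopy lifting property: `p : E → B` is a fibration if it is continuous
and every homotopy into `B` with an initial lift lifts to `E`. -/
def IsFibration {E B : Type u} [TopologicalSpace E] [TopologicalSpace B] (p : E → B) : Prop :=
  Continuous p ∧
    ∀ (Z : Type u) [TopologicalSpace Z] (H : Z × I → B) (h₀ : Z → E),
      Continuous H → Continuous h₀ → (∀ z, p (h₀ z) = H (z, 0)) →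
        ∃ G : Z × I → E, Continuous G ∧ (∀ z, G (z, 0) = h₀ z) ∧ ∀ zt, p (G zt) = H zt

/-- The relation generating the join `X ∗ Y` (third coordinate = weight of the `Y` factor):
`(x, y, 0) ~ (x, y', 0)` and `(x, y, 1) ~ (x', y, 1)`. -/
inductive JoinRel (X Y : Type*) : X × Y × I → X × Y × I → Prop
  | zero (x : X) (y y' : Y) : JoinRel X Y (x, y, 0) (x, y', 0)
  | one (x x' : X) (y : Y) : JoinRel X Y (x, y, 1) (x', y, 1)

/-- The join `X ∗ Y` as a quotient space of `X × Y × [0,1]`. -/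
def Join (X Y : Type*) [TopologicalSpace X] [TopologicalSpace Y] : Type _ :=
  Quotient (Relation.EqvGen.setoid (JoinRel X Y))

instance instTopologicalSpaceJoin (X Y : Type*) [TopologicalSpace X] [TopologicalSpace Y] :
    TopologicalSpace (Join X Y) :=
  inferInstanceAs (TopologicalSpace (Quotient _))

section FJ

variable {B E₁ E₂ : Type u} [TopologicalSpace B] [TopologicalSpace E₁] [TopologicalSpace E₂]

/-- Points `t₁e₁ + t₂e₂` of the join with `t₁, t₂ ≠ 0` must satisfy `p₁(e₁) = p₂(e₂)`. -/
def FJCompat (p₁ : E₁ → B) (p₂ : E₂ → B) : Set (E₁ × E₂ × I) :=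
  {z | z.2.2 ≠ 0 ∧ z.2.2 ≠ 1 → p₁ z.1 = p₂ z.2.1}

/-- The join relation restricted to the compatible part. -/
def FJRel (p₁ : E₁ → B) (p₂ : E₂ → B) (a b : FJCompat p₁ p₂) : Prop :=
  JoinRel E₁ E₂ a.val b.val

/-- The fiberwise join `E₁ ∗_B E₂`: the subspace of the join `E₁ ∗ E₂` of points
`t₁e₁ + t₂e₂` such that `p₁(e₁) = p₂(e₂)` whenever `t₁, t₂ ≠ 0`. -/
def FJSpace (p₁ : E₁ → B) (p₂ : E₂ → B) : Type u :=
  Quotient (Relation.EqvGen.setoid (FJRel p₁ p₂))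

instance instTopologicalSpaceFJSpace (p₁ : E₁ → B) (p₂ : E₂ → B) :
    TopologicalSpace (FJSpace p₁ p₂) :=
  inferInstanceAs (TopologicalSpace (Quotient _))

/-- The value of the fiberwise join map on representatives. -/
noncomputable def FJMapRaw (p₁ : E₁ → B) (p₂ : E₂ → B) (z : E₁ × E₂ × I) : B :=
  if z.2.2 = 0 then p₁ z.1 else p₂ z.2.1

theorem FJMapRaw_sound (p₁ : E₁ → B) (p₂ : E₂ → B) :
    ∀ u v : E₁ × E₂ × I, JoinRel E₁ E₂ u v → FJMapRaw p₁ p₂ u = FJMapRaw p₁ p₂ v := by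
  intro u v h
  cases h with
  | zero x y y' => simp [FJMapRaw]
  | one x x' y =>
      have h1 : (1 : I) ≠ 0 := fun h => one_ne_zero (congrArg Subtype.val h)
      simp [FJMapRaw, h1]

/-- The fiberwise join `p₁ ∗_B p₂ : E₁ ∗_B E₂ → B`,
sending `t₁e₁ + t₂e₂` to `p_i(e_i)` for any `i` with `t_i ≠ 0`. -/
noncomputable def FJMap (p₁ : E₁ → B) (p₂ : E₂ → B) : FJSpace p₁ p₂ → B :=
  Quotient.lift (fun a => FJMapRaw p₁ p₂ a.val) <| by
    intro a b h
    induction h with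
    | rel x y h => exact FJMapRaw_sound p₁ p₂ x.val y.val h
    | refl x => rfl
    | symm x y _ ih => exact ih.symm
    | trans x y z _ _ ih₁ ih₂ => exact ih₁.trans ih₂

end FJ


section Secat

variable {E B : Type u} [TopologicalSpace E] [TopologicalSpace B]

/-- `SecatLe p n` : the (reduced) sectional category of `p` is at most `n`, i.e. `B` admits
an open cover by `n+1` sets each admitting a continuous partial section of `p`. -/
def SecatLe (p : E → B) (n : ℕ) : Prop :=
  ∃ U : Fin (n + 1) → Set B, (∀ i, IsOpen (U i)) ∧ (⋃ i, U i) = Set.univ ∧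
    ∀ i, ∃ s : U i → E, Continuous s ∧ ∀ x : U i, p (s x) = x.val

/-- A space with a topology, mapping to `B`. -/
structure FibOver (B : Type u) [TopologicalSpace B] where
  total : Type u
  [inst : TopologicalSpace total]
  proj : total → B

attribute [instance] FibOver.inst

/-- The `(n+1)`-fold iterated fiberwise join `∗_B^{n+1} p` of `p : E → B` with itself
(`iterFJ p n` has `n+1` factors). -/
noncomputable def iterFJ (p : E → B) : ℕ → FibOver B
  | 0 => ⟨E, p⟩
  | n + 1 => ⟨FJSpace (iterFJ p n).proj p, FJMap (iterFJ p n).proj p⟩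

end Secat


set_option linter.unusedSectionVars false
set_option linter.unusedVariables false
section Aux
variable {B E₁ E₂ : Type u} [TopologicalSpace B] [TopologicalSpace E₁] [TopologicalSpace E₂]
-- auxiliary
theorem joinRel_inv {X Y : Type u} [TopologicalSpace X] [TopologicalSpace Y]
    {a b : X × Y × I} (h : JoinRel X Y a b) :
    a.2.2 = b.2.2 ∧ (a.2.2 ≠ 0 → a.2.1 = b.2.1) ∧ (a.2.2 ≠ 1 → a.1 = b.1) := by
  cases h with
  | zero x y y' => exact ⟨rfl, fun h => absurd rfl h, fun _ => rfl⟩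
  | one x x' y => exact ⟨rfl, fun _ => rfl, fun h => absurd rfl h⟩

theorem eqvGen_inv (p₁ : E₁ → B) (p₂ : E₂ → B) {a b : FJCompat p₁ p₂}
    (h : Relation.EqvGen (FJRel p₁ p₂) a b) :
    a.val.2.2 = b.val.2.2 ∧ (a.val.2.2 ≠ 0 → a.val.2.1 = b.val.2.1) ∧
      (a.val.2.2 ≠ 1 → a.val.1 = b.val.1) := by
  induction h with
  | rel x y hxy => exact joinRel_inv hxy
  | refl x => exact ⟨rfl, fun _ => rfl, fun _ => rfl⟩
  | symm x y _ ih =>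
      exact ⟨ih.1.symm, fun h => (ih.2.1 (by rw [ih.1]; exact h)).symm,
        fun h => (ih.2.2 (by rw [ih.1]; exact h)).symm⟩
  | trans x y z _ _ ih₁ ih₂ =>
      exact ⟨ih₁.1.trans ih₂.1,
        fun h => (ih₁.2.1 h).trans (ih₂.2.1 (by rw [← ih₁.1]; exact h)),
        fun h => (ih₁.2.2 h).trans (ih₂.2.2 (by rw [← ih₁.1]; exact h))⟩


noncomputable def FJt (p₁ : E₁ → B) (p₂ : E₂ → B) : FJSpace p₁ p₂ → I :=
  Quotient.lift (fun a => a.val.2.2) (fun a b h => (eqvGen_inv p₁ p₂ h).1)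

theorem continuous_FJt (p₁ : E₁ → B) (p₂ : E₂ → B) : Continuous (FJt p₁ p₂) :=
  Continuous.quotient_lift ((continuous_snd.comp continuous_snd).comp continuous_subtype_val) _

noncomputable def FJe (p₁ : E₁ → B) (p₂ : E₂ → B) (z : FJSpace p₁ p₂) : E₂ :=
  (Quotient.out z).val.2.1

noncomputable def FJf (p₁ : E₁ → B) (p₂ : E₂ → B) (z : FJSpace p₁ p₂) : E₁ :=
  (Quotient.out z).val.1

theorem FJt_mk (p₁ : E₁ → B) (p₂ : E₂ → B) (a : FJCompat p₁ p₂) :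
    FJt p₁ p₂ (Quotient.mk _ a) = a.val.2.2 := rfl

theorem out_eqv (p₁ : E₁ → B) (p₂ : E₂ → B) (a : FJCompat p₁ p₂) :
    Relation.EqvGen (FJRel p₁ p₂) (Quotient.mk (Relation.EqvGen.setoid (FJRel p₁ p₂)) a).out a :=
  Quotient.exact (Quotient.out_eq (Quotient.mk (Relation.EqvGen.setoid (FJRel p₁ p₂)) a))

theorem FJt_out (p₁ : E₁ → B) (p₂ : E₂ → B) (z : FJSpace p₁ p₂) :
    (Quotient.out z).val.2.2 = FJt p₁ p₂ z := by
  conv_rhs => rw [← Quotient.out_eq z]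
  rfl

theorem FJe_mk (p₁ : E₁ → B) (p₂ : E₂ → B) (a : FJCompat p₁ p₂) (h : a.val.2.2 ≠ 0) :
    FJe p₁ p₂ (Quotient.mk _ a) = a.val.2.1 := by
  have h2 := eqvGen_inv p₁ p₂ (out_eqv p₁ p₂ a)
  exact h2.2.1 (by rw [h2.1]; exact h)

theorem FJf_mk (p₁ : E₁ → B) (p₂ : E₂ → B) (a : FJCompat p₁ p₂) (h : a.val.2.2 ≠ 1) :
    FJf p₁ p₂ (Quotient.mk _ a) = a.val.1 := by
  have h2 := eqvGen_inv p₁ p₂ (out_eqv p₁ p₂ a)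
  exact h2.2.2 (by rw [h2.1]; exact h)
end Aux

section FJ2
variable {B E₁ E₂ : Type u} [TopologicalSpace B] [TopologicalSpace E₁] [TopologicalSpace E₂]

theorem FJMap_mk (p₁ : E₁ → B) (p₂ : E₂ → B) (a : FJCompat p₁ p₂) :
    FJMap p₁ p₂ (Quotient.mk _ a) = FJMapRaw p₁ p₂ a.val := rfl

theorem FJMap_eq_of_ne_zero (p₁ : E₁ → B) (p₂ : E₂ → B) (z : FJSpace p₁ p₂)
    (h : FJt p₁ p₂ z ≠ 0) : FJMap p₁ p₂ z = p₂ (FJe p₁ p₂ z) := by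
  have h1 : FJMap p₁ p₂ z = FJMapRaw p₁ p₂ (Quotient.out z).val := by
    conv_lhs => rw [← Quotient.out_eq z]
    rfl
  have ht : (Quotient.out z).val.2.2 ≠ 0 := by rw [FJt_out]; exact h
  rw [h1, FJMapRaw, if_neg ht]
  rfl

theorem FJMap_eq_of_ne_one (p₁ : E₁ → B) (p₂ : E₂ → B) (z : FJSpace p₁ p₂)
    (h : FJt p₁ p₂ z ≠ 1) : FJMap p₁ p₂ z = p₁ (FJf p₁ p₂ z) := by
  have h1 : FJMap p₁ p₂ z = FJMapRaw p₁ p₂ (Quotient.out z).val := by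
    conv_lhs => rw [← Quotient.out_eq z]
    rfl
  have ht : (Quotient.out z).val.2.2 ≠ 1 := by rw [FJt_out]; exact h
  by_cases h0 : (Quotient.out z).val.2.2 = 0
  · rw [h1, FJMapRaw, if_pos h0]; rfl
  · rw [h1, FJMapRaw, if_neg h0]
    exact ((Quotient.out z).property ⟨h0, ht⟩).symm

theorem continuous_fjmk (p₁ : E₁ → B) (p₂ : E₂ → B) :
    Continuous (fun a : FJCompat p₁ p₂ =>
      (Quotient.mk (Relation.EqvGen.setoid (FJRel p₁ p₂)) a : FJSpace p₁ p₂)) :=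
  continuous_quot_mk

theorem fj_isOpen (p₁ : E₁ → B) (p₂ : E₂ → B) {T : Set (FJSpace p₁ p₂)}
    (h : IsOpen ((fun a : FJCompat p₁ p₂ =>
      Quotient.mk (Relation.EqvGen.setoid (FJRel p₁ p₂)) a) ⁻¹' T)) : IsOpen T :=
  h

theorem continuousOn_FJe (p₁ : E₁ → B) (p₂ : E₂ → B) :
    ContinuousOn (FJe p₁ p₂) {z | FJt p₁ p₂ z ≠ 0} := by
  rw [continuousOn_iff_continuous_restrict]
  rw [continuous_def]
  intro V hV
  have hT : IsOpen {z : FJSpace p₁ p₂ | FJt p₁ p₂ z ≠ 0 ∧ FJe p₁ p₂ z ∈ V} := by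
    apply fj_isOpen
    have : (fun a : FJCompat p₁ p₂ =>
        Quotient.mk (Relation.EqvGen.setoid (FJRel p₁ p₂)) a) ⁻¹'
          {z | FJt p₁ p₂ z ≠ 0 ∧ FJe p₁ p₂ z ∈ V}
        = {a : FJCompat p₁ p₂ | a.val.2.2 ≠ 0 ∧ a.val.2.1 ∈ V} := by
      ext a
      simp only [Set.mem_preimage, Set.mem_setOf_eq, FJt_mk]
      constructor
      · rintro ⟨h0, he⟩
        rw [FJe_mk p₁ p₂ a h0] at he
        exact ⟨h0, he⟩
      · rintro ⟨h0, he⟩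
        rw [FJe_mk p₁ p₂ a h0]
        exact ⟨h0, he⟩
    refine (congrArg IsOpen this).mpr (IsOpen.inter ?_ ?_)
    · exact (isOpen_compl_singleton.preimage
        ((continuous_snd.comp continuous_snd).comp continuous_subtype_val))
    · exact hV.preimage ((continuous_fst.comp continuous_snd).comp continuous_subtype_val)
  have : Set.restrict {z | FJt p₁ p₂ z ≠ 0} (FJe p₁ p₂) ⁻¹' V
      = Subtype.val ⁻¹' {z : FJSpace p₁ p₂ | FJt p₁ p₂ z ≠ 0 ∧ FJe p₁ p₂ z ∈ V} := by
    ext x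
    simp only [Set.mem_preimage, Set.restrict_apply, Set.mem_setOf_eq]
    exact ⟨fun h => ⟨x.property, h⟩, fun h => h.2⟩
  exact (congrArg IsOpen this).mpr (hT.preimage continuous_subtype_val)

theorem continuousOn_FJf (p₁ : E₁ → B) (p₂ : E₂ → B) :
    ContinuousOn (FJf p₁ p₂) {z | FJt p₁ p₂ z ≠ 1} := by
  rw [continuousOn_iff_continuous_restrict]
  rw [continuous_def]
  intro V hV
  have hT : IsOpen {z : FJSpace p₁ p₂ | FJt p₁ p₂ z ≠ 1 ∧ FJf p₁ p₂ z ∈ V} := by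
    apply fj_isOpen
    have : (fun a : FJCompat p₁ p₂ =>
        Quotient.mk (Relation.EqvGen.setoid (FJRel p₁ p₂)) a) ⁻¹'
          {z | FJt p₁ p₂ z ≠ 1 ∧ FJf p₁ p₂ z ∈ V}
        = {a : FJCompat p₁ p₂ | a.val.2.2 ≠ 1 ∧ a.val.1 ∈ V} := by
      ext a
      simp only [Set.mem_preimage, Set.mem_setOf_eq, FJt_mk]
      constructor
      · rintro ⟨h0, he⟩
        rw [FJf_mk p₁ p₂ a h0] at he
        exact ⟨h0, he⟩
      · rintro ⟨h0, he⟩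
        rw [FJf_mk p₁ p₂ a h0]
        exact ⟨h0, he⟩
    refine (congrArg IsOpen this).mpr (IsOpen.inter ?_ ?_)
    · exact (isOpen_compl_singleton.preimage
        ((continuous_snd.comp continuous_snd).comp continuous_subtype_val))
    · exact hV.preimage (continuous_fst.comp continuous_subtype_val)
  have : Set.restrict {z | FJt p₁ p₂ z ≠ 1} (FJf p₁ p₂) ⁻¹' V
      = Subtype.val ⁻¹' {z : FJSpace p₁ p₂ | FJt p₁ p₂ z ≠ 1 ∧ FJf p₁ p₂ z ∈ V} := by
    ext x
    simp only [Set.mem_preimage, Set.restrict_apply, Set.mem_setOf_eq]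
    exact ⟨fun h => ⟨x.property, h⟩, fun h => h.2⟩
  exact (congrArg IsOpen this).mpr (hT.preimage continuous_subtype_val)

end FJ2

section LemA
variable {E B : Type u} [TopologicalSpace E] [TopologicalSpace B]

theorem zero_ne_one_I : (0 : I) ≠ 1 := fun h => zero_ne_one (congrArg Subtype.val h)

theorem lemA (p : E → B) :
    ∀ (n : ℕ) (U : Set B), IsOpen U → ∀ s : U → (iterFJ p n).total, Continuous s →
      (∀ x, (iterFJ p n).proj (s x) = x.val) →
      ∃ V : Fin (n + 1) → Set B, (∀ i, IsOpen (V i)) ∧ (∀ i, V i ⊆ U) ∧ U ⊆ (⋃ i, V i) ∧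
        ∀ i, ∃ sig : V i → E, Continuous sig ∧ ∀ x, p (sig x) = x.val := by
  intro n
  induction n with
  | zero =>
      intro U hU s hs hps
      exact ⟨fun _ => U, fun _ => hU, fun _ => subset_rfl,
        by simpa using Set.subset_iUnion (fun _ : Fin 1 => U) 0, fun _ => ⟨s, hs, hps⟩⟩
  | succ n ih =>
      intro U hU s hs hps
      set q := (iterFJ p n).proj with hq
      have s' : U → FJSpace q p := s
      -- U₁ : where the last coordinate is nonzero
      set U₁ : Set B := {b : B | ∃ h : b ∈ U, FJt q p (s ⟨b, h⟩) ≠ 0} with hU₁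
      set U₂ : Set B := {b : B | ∃ h : b ∈ U, FJt q p (s ⟨b, h⟩) ≠ 1} with hU₂
      have hU₁o : IsOpen U₁ := by
        have himg : U₁ = Subtype.val '' {x : U | FJt q p (s x) ≠ 0} := by
          ext b
          constructor
          · rintro ⟨h, ht⟩; exact ⟨⟨b, h⟩, ht, rfl⟩
          · rintro ⟨⟨b', hb'⟩, hx, rfl⟩; exact ⟨hb', hx⟩
        rw [himg]
        exact hU.isOpenMap_subtype_val _
          (isOpen_compl_singleton.preimage ((continuous_FJt q p).comp hs))
      have hU₂o : IsOpen U₂ := by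
        have himg : U₂ = Subtype.val '' {x : U | FJt q p (s x) ≠ 1} := by
          ext b
          constructor
          · rintro ⟨h, ht⟩; exact ⟨⟨b, h⟩, ht, rfl⟩
          · rintro ⟨⟨b', hb'⟩, hx, rfl⟩; exact ⟨hb', hx⟩
        rw [himg]
        exact hU.isOpenMap_subtype_val _
          (isOpen_compl_singleton.preimage ((continuous_FJt q p).comp hs))
      have hU₁U : U₁ ⊆ U := fun b hb => hb.choose
      have hU₂U : U₂ ⊆ U := fun b hb => hb.choose
      -- inclusion maps
      have hj₁ : Continuous (fun y : U₁ => (⟨y.val, y.property.choose⟩ : U)) :=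
        Continuous.subtype_mk continuous_subtype_val _
      have hj₂ : Continuous (fun y : U₂ => (⟨y.val, y.property.choose⟩ : U)) :=
        Continuous.subtype_mk continuous_subtype_val _
      -- section over U₁
      have hsig1 : ∃ sig : U₁ → E, Continuous sig ∧ ∀ x : U₁, p (sig x) = x.val := by
        refine ⟨fun y => FJe q p (s ⟨y.val, y.property.choose⟩), ?_, ?_⟩
        · exact (continuousOn_FJe q p).comp_continuous (hs.comp hj₁)
            (fun y => y.property.choose_spec)
        · intro y
          have h0 : FJt q p (s ⟨y.val, y.property.choose⟩) ≠ 0 := y.property.choose_spec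
          have h1 := FJMap_eq_of_ne_zero q p (s ⟨y.val, y.property.choose⟩) h0
          have h2 : FJMap q p (s ⟨y.val, y.property.choose⟩) = y.val :=
            hps ⟨y.val, y.property.choose⟩
          rw [← h1, h2]
      -- section of q over U₂
      have hsig2c : Continuous (fun y : U₂ => FJf q p (s ⟨y.val, y.property.choose⟩)) :=
        (continuousOn_FJf q p).comp_continuous (hs.comp hj₂) (fun y => y.property.choose_spec)
      have hsig2p : ∀ y : U₂,
          q (FJf q p (s ⟨y.val, y.property.choose⟩)) = y.val := by
        intro y
        have h0 : FJt q p (s ⟨y.val, y.property.choose⟩) ≠ 1 := y.property.choose_spec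
        have h1 := FJMap_eq_of_ne_one q p (s ⟨y.val, y.property.choose⟩) h0
        have h2 : FJMap q p (s ⟨y.val, y.property.choose⟩) = y.val :=
          hps ⟨y.val, y.property.choose⟩
        rw [← h1, h2]
      obtain ⟨V', hV'o, hV'sub, hV'cov, hV'sec⟩ :=
        ih U₂ hU₂o (fun y : U₂ => FJf q p (s ⟨y.val, y.property.choose⟩)) hsig2c hsig2p
      refine ⟨Fin.cons U₁ V', ?_, ?_, ?_, ?_⟩
      · intro i
        refine Fin.cases ?_ ?_ i
        · rw [Fin.cons_zero]; exact hU₁o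
        · intro j; rw [Fin.cons_succ]; exact hV'o j
      · intro i
        refine Fin.cases ?_ ?_ i
        · rw [Fin.cons_zero]; exact hU₁U
        · intro j; rw [Fin.cons_succ]; exact (hV'sub j).trans hU₂U
      · intro b hb
        by_cases h1 : FJt q p (s ⟨b, hb⟩) ≠ 0
        · exact Set.mem_iUnion.2 ⟨0, by rw [Fin.cons_zero]; exact ⟨hb, h1⟩⟩
        · push_neg at h1
          have hb2 : b ∈ U₂ := ⟨hb, by rw [h1]; exact zero_ne_one_I⟩
          obtain ⟨j, hj⟩ := Set.mem_iUnion.1 (hV'cov hb2)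
          exact Set.mem_iUnion.2 ⟨j.succ, by rw [Fin.cons_succ]; exact hj⟩
      · intro i
        refine Fin.cases ?_ ?_ i
        · rw [Fin.cons_zero]; exact hsig1
        · intro j; rw [Fin.cons_succ]; exact hV'sec j

end LemA

section LemB
variable {E B : Type u} [TopologicalSpace E] [TopologicalSpace B]

theorem fj_sound {E₁ E₂ : Type u} [TopologicalSpace E₁] [TopologicalSpace E₂]
    {p₁ : E₁ → B} {p₂ : E₂ → B} {a b : FJCompat p₁ p₂}
    (h : Relation.EqvGen (FJRel p₁ p₂) a b) :
    (Quotient.mk (Relation.EqvGen.setoid (FJRel p₁ p₂)) a : FJSpace p₁ p₂) =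
      Quotient.mk (Relation.EqvGen.setoid (FJRel p₁ p₂)) b :=
  Quot.sound h

noncomputable def Hfun (G : ℕ → B → ℝ) : ℕ → B → ℝ
  | 0 => G 0
  | k+1 => fun b => max (Hfun G k b) (G (k+1) b)

theorem Hfun_succ (G : ℕ → B → ℝ) (k : ℕ) (b : B) :
    Hfun G (k+1) b = max (Hfun G k b) (G (k+1) b) := rfl

theorem Hfun_cont {G : ℕ → B → ℝ} (hG : ∀ i, Continuous (G i)) : ∀ k, Continuous (Hfun G k)
  | 0 => hG 0
  | k+1 => (Hfun_cont hG k).max (hG (k+1))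

theorem Hfun_nonneg {G : ℕ → B → ℝ} (hG : ∀ i b, 0 ≤ G i b) : ∀ k b, 0 ≤ Hfun G k b
  | 0, b => hG 0 b
  | k+1, b => le_trans (Hfun_nonneg hG k b) (le_max_left _ _)

theorem le_Hfun {G : ℕ → B → ℝ} : ∀ (k i : ℕ), i ≤ k → ∀ b, G i b ≤ Hfun G k b := by
  intro k
  induction k with
  | zero =>
      intro i hi b
      rw [Nat.le_zero.1 hi]
      exact le_refl _
  | succ k ihk =>
      intro i hi b
      rcases Nat.lt_or_ge i (k+1) with h | h
      · exact le_trans (ihk i (Nat.lt_succ_iff.1 h) b) (le_max_left _ _)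
      · have : i = k + 1 := le_antisymm hi h
        rw [this]
        exact le_max_right _ _

noncomputable def iterFJJunk (p : E → B) (e₀ : E) : ∀ k, (iterFJ p k).total
  | 0 => e₀
  | k+1 => Quotient.mk _ ⟨(iterFJJunk p e₀ k, e₀, 1), fun h => absurd rfl h.2⟩

theorem lemB (p : E → B) (e₀ : E) (V : ℕ → Set B) (sV : ∀ i, V i → E)
    (hsc : ∀ i, Continuous (sV i)) (hsp : ∀ i (x : V i), p (sV i x) = x.val)
    (g : ℕ → B → ℝ) (hgc : ∀ i, Continuous (g i))
    (hgV : ∀ i b, 1/4 < g i b → b ∈ V i) :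
    ∀ k, ∃ sig : B → (iterFJ p k).total,
      ContinuousOn sig {b | 0 < Hfun (fun i b => max 0 (2 * g i b - 1)) k b} ∧
      ∀ b, 0 < Hfun (fun i b => max 0 (2 * g i b - 1)) k b → (iterFJ p k).proj (sig b) = b := by
  classical
  set G : ℕ → B → ℝ := fun i b => max 0 (2 * g i b - 1) with hGdef
  have hGc : ∀ i, Continuous (G i) := fun i =>
    continuous_const.max ((continuous_const.mul (hgc i)).sub continuous_const)
  have hG0 : ∀ i b, 0 ≤ G i b := fun i b => le_max_left 0 _
  have hGg : ∀ i b, 0 < G i b → 1/4 < g i b := by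
    intro i b h
    have h' : 0 < 2 * g i b - 1 := by
      rcases lt_max_iff.1 h with h | h
      · exact absurd h (lt_irrefl 0)
      · exact h
    linarith
  have hGz : ∀ i b, g i b < 1/2 → G i b = 0 := by
    intro i b h
    exact max_eq_left (by linarith)
  -- partial sections, extended by junk
  set eC : ℕ → B → E := fun i b => if h : b ∈ V i then sV i ⟨b, h⟩ else e₀ with heCdef
  have heCc : ∀ i, ContinuousOn (eC i) {b | 1/4 < g i b} := by
    intro i
    have hsub : {b | 1/4 < g i b} ⊆ V i := fun b hb => hgV i b hb
    rw [continuousOn_iff_continuous_restrict]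
    have : Set.domRestrict {b | 1/4 < g i b} (eC i) = sV i ∘ Set.inclusion hsub := by
      funext x
      simp only [Set.domRestrict_apply, heCdef]
      rw [dif_pos (hsub x.2)]
      rfl
    rw [this]
    exact (hsc i).comp (continuous_inclusion hsub)
  have heCp : ∀ i b, 1/4 < g i b → p (eC i b) = b := by
    intro i b hb
    have hb' : b ∈ V i := hgV i b hb
    simp only [heCdef, dif_pos hb']
    exact hsp i ⟨b, hb'⟩
  intro k
  induction k with
  | zero =>
      refine ⟨eC 0, ?_, ?_⟩
      · exact (heCc 0).mono (fun b hb => hGg 0 b hb)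
      · intro b hb
        exact heCp 0 b (hGg 0 b hb)
  | succ k ihk =>
      obtain ⟨sig, hsigc, hsigp⟩ := ihk
      set q : (iterFJ p k).total → B := (iterFJ p k).proj with hqdef
      set t : B → ℝ := fun b => G (k+1) b / Hfun G (k+1) b with htdef
      have hH1nn : ∀ b, 0 ≤ Hfun G (k+1) b := Hfun_nonneg hG0 _
      have hHknn : ∀ b, 0 ≤ Hfun G k b := Hfun_nonneg hG0 _
      have ht0 : ∀ b, 0 ≤ t b := fun b => div_nonneg (hG0 _ b) (hH1nn b)
      have ht1 : ∀ b, t b ≤ 1 := by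
        intro b
        rcases eq_or_lt_of_le (hH1nn b) with h | h
        · simp only [htdef, ← h, div_zero]
          exact zero_le_one
        · exact (div_le_one h).2 (by rw [Hfun_succ]; exact le_max_right _ _)
      set tI : B → I := fun b => ⟨t b, ht0 b, ht1 b⟩ with htIdef
      -- basic facts about t
      have htG : ∀ b, G (k+1) b = 0 → tI b = 0 := by
        intro b h
        apply Subtype.ext
        show t b = 0
        simp only [htdef, h, zero_div]
      have htpos : ∀ b, 0 < G (k+1) b → tI b ≠ 0 := by
        intro b h hc
        have : t b = 0 := congrArg Subtype.val hc
        have hd : 0 < Hfun G (k+1) b := by rw [Hfun_succ]; exact lt_of_lt_of_le h (le_max_right _ _)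
        have := (div_eq_zero_iff.1 this)
        rcases this with h' | h'
        · exact absurd h' (ne_of_gt h)
        · exact absurd h' (ne_of_gt hd)
      have htone : ∀ b, Hfun G k b < G (k+1) b → tI b = 1 := by
        intro b h
        apply Subtype.ext
        show t b = 1
        have hmax : Hfun G (k+1) b = G (k+1) b := by rw [Hfun_succ]; exact max_eq_right (le_of_lt h)
        have hpos : 0 < G (k+1) b := lt_of_le_of_lt (hHknn b) h
        simp only [htdef, hmax]
        exact div_self (ne_of_gt hpos)
      have htne1 : ∀ b, tI b ≠ 0 → tI b ≠ 1 → 0 < Hfun G k b := by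
        intro b h0 h1
        rcases eq_or_lt_of_le (hHknn b) with h | h
        · -- Hfun G k b = 0
          rcases eq_or_lt_of_le (hG0 (k+1) b) with hg' | hg'
          · exact absurd (htG b hg'.symm) h0
          · exact absurd (htone b (by rw [← h]; exact hg')) h1
        · exact h
      have compat : ∀ b, (sig b, eC (k+1) b, tI b) ∈ FJCompat q p := by
        intro b hc
        have hk0 : 0 < Hfun G k b := htne1 b hc.1 hc.2
        have hGpos : 0 < G (k+1) b := by
          rcases eq_or_lt_of_le (hG0 (k+1) b) with hg' | hg'
          · exact absurd (htG b hg'.symm) hc.1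
          · exact hg'
        rw [hsigp b hk0, heCp (k+1) b (hGg (k+1) b hGpos)]
      refine ⟨fun b => Quotient.mk _ ⟨(sig b, eC (k+1) b, tI b), compat b⟩, ?_, ?_⟩
      · -- continuity
        have hWo : IsOpen {b | 0 < Hfun G (k+1) b} :=
          isOpen_lt continuous_const (Hfun_cont hGc (k+1))
        have hWko : IsOpen {b | 0 < Hfun G k b} :=
          isOpen_lt continuous_const (Hfun_cont hGc k)
        have hWsub : {b | 0 < Hfun G k b} ⊆ {b | 0 < Hfun G (k+1) b} := fun b hb => by
          rw [Set.mem_setOf_eq, Hfun_succ]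
          exact lt_of_lt_of_le hb (le_max_left _ _)
        have htIc : ContinuousOn tI {b | 0 < Hfun G (k+1) b} := by
          rw [Topology.IsInducing.subtypeVal.continuousOn_iff]
          exact ContinuousOn.div (hGc (k+1)).continuousOn
            (Hfun_cont hGc (k+1)).continuousOn (fun x hx => ne_of_gt hx)
        intro b hb
        rcases eq_or_lt_of_le (hHknn b) with hk | hk
        · -- case C : Hfun G k b = 0, so t = 1 near b
          have hGpos : 0 < G (k+1) b := by
            rw [Set.mem_setOf_eq, Hfun_succ] at hb
            rcases lt_max_iff.1 hb with h | h
            · exact absurd h (by rw [← hk]; exact lt_irrefl 0)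
            · exact h
          set N : Set B := {x | Hfun G k x < G (k+1) x} ∩ {x | 1/4 < g (k+1) x} with hNdef
          have hNo : IsOpen N :=
            (isOpen_lt (Hfun_cont hGc k) (hGc (k+1))).inter
              (isOpen_lt continuous_const (hgc (k+1)))
          have hbN : b ∈ N :=
            ⟨by show Hfun G k b < G (k+1) b; rw [← hk]; exact hGpos, hGg (k+1) b hGpos⟩
          set J : (iterFJ p k).total := iterFJJunk p e₀ k with hJdef
          have hψc : ContinuousOn (fun x => (Quotient.mk (Relation.EqvGen.setoid (FJRel q p))
              ⟨(J, eC (k+1) x, 1), fun hc => absurd rfl hc.2⟩ : FJSpace q p)) N := by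
            apply Continuous.comp_continuousOn (continuous_fjmk q p)
            rw [Topology.IsInducing.subtypeVal.continuousOn_iff]
            exact (continuousOn_const.prodMk
              (((heCc (k+1)).mono (fun x hx => hx.2)).prodMk continuousOn_const))
          have hEq : Set.EqOn (fun b => (Quotient.mk (Relation.EqvGen.setoid (FJRel q p))
                ⟨(sig b, eC (k+1) b, tI b), compat b⟩ : FJSpace q p))
              (fun x => Quotient.mk (Relation.EqvGen.setoid (FJRel q p))
                ⟨(J, eC (k+1) x, 1), fun hc => absurd rfl hc.2⟩) N := by
            intro x hx
            have ht1x : tI x = 1 := htone x hx.1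
            have h1 : (⟨(sig x, eC (k+1) x, tI x), compat x⟩ : FJCompat q p)
                = ⟨(sig x, eC (k+1) x, 1), fun hc => absurd rfl hc.2⟩ :=
              Subtype.ext (congrArg (fun u => (sig x, eC (k+1) x, u)) ht1x)
            show Quotient.mk _ _ = _
            rw [h1]
            exact fj_sound (Relation.EqvGen.rel _ _ (JoinRel.one (sig x) J (eC (k+1) x)))
          exact ((hψc.congr hEq).continuousAt (hNo.mem_nhds hbN)).continuousWithinAt
        · -- Hfun G k b > 0
          rcases lt_or_ge (g (k+1) b) (1/2) with hg | hg
          · -- case B : t = 0 near b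
            set N : Set B := {x | 0 < Hfun G k x} ∩ {x | g (k+1) x < 1/2} with hNdef
            have hNo : IsOpen N := hWko.inter (isOpen_lt (hgc (k+1)) continuous_const)
            have hbN : b ∈ N := ⟨hk, hg⟩
            have hψc : ContinuousOn (fun x => (Quotient.mk (Relation.EqvGen.setoid (FJRel q p))
                ⟨(sig x, e₀, 0), fun hc => absurd rfl hc.1⟩ : FJSpace q p)) N := by
              apply Continuous.comp_continuousOn (continuous_fjmk q p)
              rw [Topology.IsInducing.subtypeVal.continuousOn_iff]
              exact ((hsigc.mono (fun x hx => hx.1)).prodMk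
                (continuousOn_const.prodMk continuousOn_const))
            have hEq : Set.EqOn (fun b => (Quotient.mk (Relation.EqvGen.setoid (FJRel q p))
                  ⟨(sig b, eC (k+1) b, tI b), compat b⟩ : FJSpace q p))
                (fun x => Quotient.mk (Relation.EqvGen.setoid (FJRel q p))
                  ⟨(sig x, e₀, 0), fun hc => absurd rfl hc.1⟩) N := by
              intro x hx
              have ht0x : tI x = 0 := htG x (hGz (k+1) x hx.2)
              have h1 : (⟨(sig x, eC (k+1) x, tI x), compat x⟩ : FJCompat q p)
                  = ⟨(sig x, eC (k+1) x, 0), fun hc => absurd rfl hc.1⟩ :=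
                Subtype.ext (congrArg (fun u => (sig x, eC (k+1) x, u)) ht0x)
              show Quotient.mk _ _ = _
              rw [h1]
              exact fj_sound (Relation.EqvGen.rel _ _ (JoinRel.zero (sig x) (eC (k+1) x) e₀))
            exact ((hψc.congr hEq).continuousAt (hNo.mem_nhds hbN)).continuousWithinAt
          · -- case A : all components continuous near b
            set N : Set B := {x | 0 < Hfun G k x} ∩ {x | 1/4 < g (k+1) x} with hNdef
            have hNo : IsOpen N := hWko.inter (isOpen_lt continuous_const (hgc (k+1)))
            have hbN : b ∈ N := ⟨hk, show (1:ℝ)/4 < g (k+1) b by linarith⟩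
            have hNW : N ⊆ {x | 0 < Hfun G (k+1) x} := fun x hx => hWsub hx.1
            have hc : ContinuousOn (fun b => (Quotient.mk (Relation.EqvGen.setoid (FJRel q p))
                ⟨(sig b, eC (k+1) b, tI b), compat b⟩ : FJSpace q p)) N := by
              apply Continuous.comp_continuousOn (continuous_fjmk q p)
              rw [Topology.IsInducing.subtypeVal.continuousOn_iff]
              exact ((hsigc.mono (fun x hx => hx.1)).prodMk
                (((heCc (k+1)).mono (fun x hx => hx.2)).prodMk (htIc.mono hNW)))
            exact (hc.continuousAt (hNo.mem_nhds hbN)).continuousWithinAt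
      · -- section property
        intro b hb
        show FJMap q p (Quotient.mk _ ⟨(sig b, eC (k+1) b, tI b), compat b⟩) = b
        rw [FJMap_mk]
        rcases eq_or_lt_of_le (hG0 (k+1) b) with hg' | hg'
        · have ht0x : tI b = 0 := htG b hg'.symm
          show (if tI b = 0 then q (sig b) else p (eC (k+1) b)) = b
          rw [if_pos ht0x]
          apply hsigp
          have : Hfun G (k+1) b = Hfun G k b := by
            rw [Hfun_succ]; exact max_eq_left (by rw [← hg']; exact hHknn b)
          rw [← this]
          exact hb
        · have htn : tI b ≠ 0 := htpos b hg'
          show (if tI b = 0 then q (sig b) else p (eC (k+1) b)) = b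
          rw [if_neg htn]
          exact heCp (k+1) b (hGg (k+1) b hg')

end LemB

/-- Schwarz: for a fibration `p : E → B` over a normal base `B`,
`secat p ≤ n` iff the `(n+1)`-fold fiberwise join `∗_B^{n+1} p` admits a global continuous
section. -/
theorem secatLe_iff_iterFJ_section {E B : Type u} [TopologicalSpace E] [TopologicalSpace B]
    (p : E → B) (hp : IsFibration p) (hB : NormalSpace B) (n : ℕ) :
    SecatLe p n ↔
      ∃ s : B → (iterFJ p n).total, Continuous s ∧ ∀ b, (iterFJ p n).proj (s b) = b := by
  constructor
  · rintro ⟨U, hUo, hUcov, hUs⟩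
    by_cases hBne : Nonempty B
    · obtain ⟨b₀⟩ := hBne
      have hb₀ : b₀ ∈ ⋃ i, U i := by rw [hUcov]; trivial
      obtain ⟨i₀, hi₀⟩ := Set.mem_iUnion.1 hb₀
      obtain ⟨s₀, hs₀c, hs₀p⟩ := hUs i₀
      set e₀ : E := s₀ ⟨b₀, hi₀⟩ with he₀
      obtain ⟨v, hvU, hvcl, hvsub⟩ :=
        exists_iUnion_eq_closed_subset hUo (fun x => Set.toFinite _) hUcov
      have hf : ∀ i : Fin (n+1), ∃ f : C(B, ℝ), Set.EqOn f 0 (U i)ᶜ ∧ Set.EqOn f 1 (v i) ∧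
          ∀ x, f x ∈ Set.Icc (0:ℝ) 1 :=
        fun i => exists_continuous_zero_one_of_isClosed (hUo i).isClosed_compl (hvcl i)
          (disjoint_compl_left.mono_right (hvsub i))
      choose f hf0 hf1 hf01 using hf
      classical
      set V' : ℕ → Set B := fun i => if h : i < n+1 then U ⟨i, h⟩ else ∅ with hV'def
      have hsV' : ∀ i, ∃ sv : V' i → E, Continuous sv ∧ ∀ x : V' i, p (sv x) = x.val := by
        intro i
        by_cases h : i < n+1
        · rw [show V' i = U ⟨i, h⟩ from dif_pos h]
          exact hUs ⟨i, h⟩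
        · rw [show V' i = ∅ from dif_neg h]
          exact ⟨fun _ => e₀, continuous_const, fun x => absurd x.2 (Set.notMem_empty _)⟩
      choose sV hsVc hsVp using hsV'
      set g : ℕ → B → ℝ := fun i b => if h : i < n+1 then f ⟨i, h⟩ b else 0 with hgdef
      have hgc : ∀ i, Continuous (g i) := by
        intro i
        by_cases h : i < n+1
        · have : g i = fun b => f ⟨i, h⟩ b := by
            funext b; simp only [hgdef]; rw [dif_pos h]
          rw [this]; exact (f ⟨i, h⟩).continuous
        · have : g i = fun _ => (0:ℝ) := by
            funext b; simp only [hgdef]; rw [dif_neg h]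
          rw [this]; exact continuous_const
      have hgV : ∀ i b, 1/4 < g i b → b ∈ V' i := by
        intro i b hb
        by_cases h : i < n+1
        · have hgb : g i b = f ⟨i, h⟩ b := by simp only [hgdef]; rw [dif_pos h]
          rw [hgb] at hb
          rw [show V' i = U ⟨i, h⟩ from dif_pos h]
          by_contra hc
          have h0 := hf0 ⟨i, h⟩ hc
          rw [h0] at hb
          norm_num at hb
        · have hgb : g i b = 0 := by simp only [hgdef]; rw [dif_neg h]
          rw [hgb] at hb
          norm_num at hb
      obtain ⟨sig, hsigc, hsigp⟩ := lemB p e₀ V' sV hsVc hsVp g hgc hgV n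
      have hWuniv : ∀ b : B, 0 < Hfun (fun i b => max 0 (2 * g i b - 1)) n b := by
        intro b
        have hbv : b ∈ ⋃ i, v i := by rw [hvU]; trivial
        obtain ⟨i, hi⟩ := Set.mem_iUnion.1 hbv
        have hfi : (f i) b = 1 := (hf1 i hi).trans rfl
        have hgi : g i.val b = 1 := by
          simp only [hgdef]
          rw [dif_pos i.isLt, Fin.eta]
          exact hfi
        have hGi : max (0:ℝ) (2 * g i.val b - 1) = 1 := by rw [hgi]; norm_num
        have hle := le_Hfun (G := fun i b => max 0 (2 * g i b - 1)) n i.val (Nat.lt_succ_iff.1 i.isLt) b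
        rw [hGi] at hle
        linarith
      refine ⟨sig, ?_, fun b => hsigp b (hWuniv b)⟩
      rw [← continuousOn_univ]
      exact hsigc.mono (fun b _ => hWuniv b)
    · have hBe : IsEmpty B := not_nonempty_iff.1 hBne
      have hall : ∀ s : Set B, IsOpen s := by
        intro s
        rw [Set.eq_empty_of_isEmpty s]
        exact isOpen_empty
      exact ⟨fun b => isEmptyElim b, continuous_def.2 fun s _ => hall _,
        fun b => isEmptyElim b⟩
  · rintro ⟨s, hsc, hsp⟩
    obtain ⟨V, hVo, hVsub, hVcov, hVsec⟩ := lemA p n Set.univ isOpen_univ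
      (fun x => s x.val) (hsc.comp continuous_subtype_val) (fun x => hsp x.val)
    exact ⟨V, hVo, Set.eq_univ_of_univ_subset hVcov, hVsec⟩
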